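/- Strong subadditivity of von Neumann entropy follows from monotonicity of relative entropy: if D(ρ^{ABC} ‖ ρ^{AB} ⊗ ρ^C) ≥ D(ρ^{BC} ‖ ρ^B ⊗ ρ^C) holds for every tripartite density operator ρ^{ABC}, then S(ρ^{AB}) + S(ρ^{BC}) ≥ S(ρ^{ABC}) + S(ρ^B) for every tripartite density operator ρ^{ABC}. -/

import Mathlib

set_option linter.unusedSectionVars false


open Matrix Kronecker
open scoped ComplexOrder

/-- Matrix logarithm (base 2) of a Hermitian matrix via its spectral
decomposition, with the convention `log 0 = 0`; junk value `0` on
non-Hermitian input. -/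
noncomputable def matLog {ι : Type*} [Fintype ι] [DecidableEq ι]
    (A : Matrix ι ι ℂ) : Matrix ι ι ℂ :=
  if h : A.IsHermitian then
    (h.eigenvectorUnitary : Matrix ι ι ℂ) *
      Matrix.diagonal (fun i => (Real.logb 2 (h.eigenvalues i) : ℂ)) *
      star (h.eigenvectorUnitary : Matrix ι ι ℂ)
  else 0

/-- Quantum relative entropy `D(ρ‖σ) = tr ρ (log ρ − log σ)` (base-2 logs). -/
noncomputable def relEnt {ι : Type*} [Fintype ι] [DecidableEq ι]
    (ρ σ : Matrix ι ι ℂ) : ℝ :=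
  ((ρ * (matLog ρ - matLog σ)).trace).re

/-- Von Neumann entropy `S(ρ) = −tr ρ log ρ` (base-2 log). -/
noncomputable def vnEnt {ι : Type*} [Fintype ι] [DecidableEq ι]
    (ρ : Matrix ι ι ℂ) : ℝ :=
  -((ρ * matLog ρ).trace).re

/-- `ρ` is a density matrix: positive semidefinite with unit trace. -/
def IsDensity {ι : Type*} [Fintype ι] (ρ : Matrix ι ι ℂ) : Prop :=
  ρ.PosSemidef ∧ ρ.trace = 1

/-- Support inclusion `supp ρ ⊆ supp σ` (for PSD matrices), expressed via
kernel containment: every vector annihilated by `σ` is annihilated by `ρ`. -/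
def SuppLE {ι : Type*} [Fintype ι] (ρ σ : Matrix ι ι ℂ) : Prop :=
  ∀ v : ι → ℂ, σ *ᵥ v = 0 → ρ *ᵥ v = 0

variable {α β γ : Type*}

/-- Reduced state on `AB` of a tripartite state on `A ⊗ B ⊗ C`. -/
noncomputable def trC [Fintype γ] (M : Matrix (α × β × γ) (α × β × γ) ℂ) :
    Matrix (α × β) (α × β) ℂ :=
  fun i j => ∑ k : γ, M (i.1, i.2, k) (j.1, j.2, k)

/-- Reduced state on `BC`. -/
noncomputable def trA [Fintype α] (M : Matrix (α × β × γ) (α × β × γ) ℂ) :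
    Matrix (β × γ) (β × γ) ℂ :=
  fun i j => ∑ k : α, M (k, i.1, i.2) (k, j.1, j.2)

/-- Reduced state on `B`. -/
noncomputable def trAC [Fintype α] [Fintype γ]
    (M : Matrix (α × β × γ) (α × β × γ) ℂ) : Matrix β β ℂ :=
  fun i j => ∑ k : α, ∑ l : γ, M (k, i, l) (k, j, l)

/-- Reduced state on `C`. -/
noncomputable def trAB [Fintype α] [Fintype β]
    (M : Matrix (α × β × γ) (α × β × γ) ℂ) : Matrix γ γ ℂ :=
  fun i j => ∑ k : α, ∑ l : β, M (k, l, i) (k, l, j)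

/-- Reassociation `A ⊗ (B ⊗ C) ≃ (A ⊗ B) ⊗ C`. -/
def assocM (M : Matrix (α × β × γ) (α × β × γ) ℂ) :
    Matrix ((α × β) × γ) ((α × β) × γ) ℂ :=
  fun p q => M (p.1.1, p.1.2, p.2) (q.1.1, q.1.2, q.2)

section Aux
variable {ι κ : Type*} [Fintype ι] [DecidableEq ι] [Fintype κ] [DecidableEq κ]

lemma diag_comm_aux {M : Matrix ι ι ℂ} {μ d : ι → ℝ} (f : ℝ → ℝ)
    (h : Matrix.diagonal (fun i => (μ i : ℂ)) * M = M * Matrix.diagonal (fun j => (d j : ℂ))) :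
    Matrix.diagonal (fun i => (f (μ i) : ℂ)) * M
      = M * Matrix.diagonal (fun j => (f (d j) : ℂ)) := by
  ext i j
  have h' := congrFun (congrFun (congrArg (fun X => X) h) i) j
  simp only [Matrix.diagonal_mul, Matrix.mul_diagonal] at h' ⊢
  rcases eq_or_ne (M i j) 0 with hM | hM
  · simp [hM]
  · have hmu : (μ i : ℂ) = (d j : ℂ) := by
      have : (μ i : ℂ) * M i j = (d j : ℂ) * M i j := by rw [h']; ring
      exact mul_right_cancel₀ hM this
    have : μ i = d j := by exact_mod_cast hmu
    rw [this, mul_comm]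

lemma matLog_conj (U : Matrix ι ι ℂ) (hU : U * star U = 1) (hU' : star U * U = 1) (d : ι → ℝ) :
    matLog (U * Matrix.diagonal (fun i => (d i : ℂ)) * star U)
      = U * Matrix.diagonal (fun i => (Real.logb 2 (d i) : ℂ)) * star U := by
  have hDh : (Matrix.diagonal (fun i => (d i : ℂ)))ᴴ = Matrix.diagonal (fun i => (d i : ℂ)) := by
    ext i j
    by_cases h : i = j
    · subst h; simp [Matrix.conjTranspose_apply, Matrix.diagonal_apply_eq, Complex.conj_ofReal]
    · rw [Matrix.conjTranspose_apply, Matrix.diagonal_apply_ne _ h,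
        Matrix.diagonal_apply_ne _ (Ne.symm h), star_zero]
  have hA : (U * Matrix.diagonal (fun i => (d i : ℂ)) * star U).IsHermitian := by
    unfold Matrix.IsHermitian
    calc (U * Matrix.diagonal (fun i => (d i : ℂ)) * star U)ᴴ
        = (star U)ᴴ * ((Matrix.diagonal (fun i => (d i : ℂ)))ᴴ * Uᴴ) := by
          rw [Matrix.conjTranspose_mul, Matrix.conjTranspose_mul]
      _ = U * Matrix.diagonal (fun i => (d i : ℂ)) * star U := by
          rw [hDh]; simp [Matrix.star_eq_conjTranspose, mul_assoc]
  set A := U * Matrix.diagonal (fun i => (d i : ℂ)) * star U with hA_def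
  rw [matLog, dif_pos hA]
  set V : Matrix ι ι ℂ := (hA.eigenvectorUnitary : Matrix ι ι ℂ) with hV_def
  have hV : V * star V = 1 := Matrix.mem_unitaryGroup_iff.mp hA.eigenvectorUnitary.2
  have hV' : star V * V = 1 := Matrix.mem_unitaryGroup_iff'.mp hA.eigenvectorUnitary.2
  have hspec : A = V * Matrix.diagonal (fun i => ((hA.eigenvalues i : ℝ) : ℂ)) * star V := by
    have := hA.spectral_theorem
    rw [Unitary.conjStarAlgAut_apply] at this
    exact this
  set M := star V * U with hM_def
  have h1 : Matrix.diagonal (fun i => ((hA.eigenvalues i : ℝ) : ℂ)) * M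
      = M * Matrix.diagonal (fun j => (d j : ℂ)) := by
    have e1 : star V * A * U
        = Matrix.diagonal (fun i => ((hA.eigenvalues i : ℝ) : ℂ)) * M := by
      conv_lhs => rw [hspec]
      simp only [← mul_assoc]
      rw [hV', one_mul, mul_assoc]
    have e2 : star V * A * U = M * Matrix.diagonal (fun j => (d j : ℂ)) := by
      conv_lhs => rw [hA_def]
      simp only [← mul_assoc]
      rw [mul_assoc _ (star U) U, hU', mul_one]
    rw [← e1, e2]
  have h2 := diag_comm_aux (Real.logb 2) h1
  have hVM : V * M = U := by rw [hM_def, ← mul_assoc, hV, one_mul]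
  have hMU : M * star U = star V := by rw [hM_def, mul_assoc, hU, mul_one]
  calc V * Matrix.diagonal (fun i => ((Real.logb 2 (hA.eigenvalues i) : ℝ) : ℂ)) * star V
      = V * Matrix.diagonal (fun i => ((Real.logb 2 (hA.eigenvalues i) : ℝ) : ℂ)) * (M * star U) := by
        rw [hMU]
    _ = V * (Matrix.diagonal (fun i => ((Real.logb 2 (hA.eigenvalues i) : ℝ) : ℂ)) * M) * star U := by
        simp only [mul_assoc]
    _ = V * (M * Matrix.diagonal (fun j => ((Real.logb 2 (d j) : ℝ) : ℂ))) * star U := by rw [h2]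
    _ = (V * M) * Matrix.diagonal (fun j => ((Real.logb 2 (d j) : ℝ) : ℂ)) * star U := by
        simp only [mul_assoc]
    _ = U * Matrix.diagonal (fun i => (Real.logb 2 (d i) : ℂ)) * star U := by rw [hVM]

end Aux

section Aux2
variable {ι κ : Type*} [Fintype ι] [DecidableEq ι] [Fintype κ] [DecidableEq κ]

lemma kron_conjTranspose (A : Matrix ι ι ℂ) (B : Matrix κ κ ℂ) :
    (A ⊗ₖ B)ᴴ = Aᴴ ⊗ₖ Bᴴ := by
  ext p q
  simp [Matrix.conjTranspose_apply, star_mul']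

/-- partial trace over the second factor -/
noncomputable def ptr2 (M : Matrix (ι × κ) (ι × κ) ℂ) : Matrix ι ι ℂ :=
  fun i j => ∑ k, M (i, k) (j, k)

/-- partial trace over the first factor -/
noncomputable def ptr1 (M : Matrix (ι × κ) (ι × κ) ℂ) : Matrix κ κ ℂ :=
  fun i j => ∑ k, M (k, i) (k, j)

lemma sum_quad2 (ρ : Matrix (ι × κ) (ι × κ) ℂ) (u : ι → ℂ) :
    ∑ k : κ, star (fun p : ι × κ => u p.1 * (if p.2 = k then 1 else 0)) ⬝ᵥ
        ρ *ᵥ (fun p : ι × κ => u p.1 * (if p.2 = k then 1 else 0))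
      = star u ⬝ᵥ (ptr2 ρ *ᵥ u) := by
  simp only [dotProduct, Matrix.mulVec, ptr2, Pi.star_apply, star_mul',
    Fintype.sum_prod_type, mul_ite, mul_one, mul_zero, ite_mul, zero_mul,
    Finset.sum_ite_eq', Finset.mem_univ, if_true, apply_ite, star_one, star_zero,
    Finset.mul_sum, Finset.sum_mul]
  simp only [Finset.sum_ite_irrel, Finset.sum_const_zero, Finset.sum_ite_eq',
    Finset.mem_univ, if_true]
  rw [Finset.sum_comm]
  exact Finset.sum_congr rfl fun x1 _ => Finset.sum_comm

lemma sum_quad1 (ρ : Matrix (ι × κ) (ι × κ) ℂ) (v : κ → ℂ) :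
    ∑ k : ι, star (fun p : ι × κ => (if p.1 = k then 1 else 0) * v p.2) ⬝ᵥ
        ρ *ᵥ (fun p : ι × κ => (if p.1 = k then 1 else 0) * v p.2)
      = star v ⬝ᵥ (ptr1 ρ *ᵥ v) := by
  simp only [dotProduct, Matrix.mulVec, ptr1, Pi.star_apply, star_mul',
    Fintype.sum_prod_type, mul_ite, mul_one, mul_zero, ite_mul, zero_mul, one_mul,
    Finset.sum_ite_eq', Finset.mem_univ, if_true, apply_ite, star_one, star_zero,
    Finset.mul_sum, Finset.sum_mul]
  simp only [Finset.sum_ite_irrel, Finset.sum_const_zero, Finset.sum_ite_eq',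
    Finset.mem_univ, if_true]
  rw [Finset.sum_comm]
  exact Finset.sum_congr rfl fun x1 _ => Finset.sum_comm

end Aux2


section Aux3
variable {ι κ : Type*} [Fintype ι] [DecidableEq ι] [Fintype κ] [DecidableEq κ]

lemma ptr2_isHermitian {M : Matrix (ι × κ) (ι × κ) ℂ} (h : M.IsHermitian) :
    (ptr2 M).IsHermitian := by
  ext i j
  simp only [Matrix.conjTranspose_apply, ptr2, star_sum]
  exact Finset.sum_congr rfl fun k _ => h.apply (i, k) (j, k)

lemma ptr1_isHermitian {M : Matrix (ι × κ) (ι × κ) ℂ} (h : M.IsHermitian) :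
    (ptr1 M).IsHermitian := by
  ext i j
  simp only [Matrix.conjTranspose_apply, ptr1, star_sum]
  exact Finset.sum_congr rfl fun k _ => h.apply (k, i) (k, j)

lemma ptr1_posSemidef {ρ : Matrix (ι × κ) (ι × κ) ℂ} (hρ : ρ.PosSemidef) :
    (ptr1 ρ).PosSemidef := by
  refine .of_dotProduct_mulVec_nonneg (ptr1_isHermitian hρ.1) fun v => ?_
  rw [← sum_quad1 ρ v]
  exact Finset.sum_nonneg fun k _ => hρ.dotProduct_mulVec_nonneg _

lemma supp2 {ρ : Matrix (ι × κ) (ι × κ) ℂ} (hρ : ρ.PosSemidef)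
    {u : ι → ℂ} (hu : ptr2 ρ *ᵥ u = 0) (v : κ → ℂ) :
    ρ *ᵥ (fun p : ι × κ => u p.1 * v p.2) = 0 := by
  have hzero : ∀ k : κ,
      ρ *ᵥ (fun p : ι × κ => u p.1 * (if p.2 = k then 1 else 0)) = 0 := by
    have hsum := sum_quad2 ρ u
    rw [hu, dotProduct_zero] at hsum
    have hterm : ∀ k : κ, star (fun p : ι × κ => u p.1 * (if p.2 = k then 1 else 0)) ⬝ᵥ
        ρ *ᵥ (fun p : ι × κ => u p.1 * (if p.2 = k then 1 else 0)) = 0 := by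
      have := (Finset.sum_eq_zero_iff_of_nonneg
        (fun k _ => hρ.dotProduct_mulVec_nonneg (fun p : ι × κ => u p.1 * (if p.2 = k then 1 else 0)))).mp hsum
      exact fun k => this k (Finset.mem_univ k)
    exact fun k => (hρ.dotProduct_mulVec_zero_iff _).mp (hterm k)
  have hdecomp : (fun p : ι × κ => u p.1 * v p.2)
      = ∑ k : κ, v k • (fun p : ι × κ => u p.1 * (if p.2 = k then 1 else 0)) := by
    funext p
    simp only [Finset.sum_apply, Pi.smul_apply, smul_eq_mul, mul_ite, mul_one, mul_zero]
    rw [Finset.sum_ite_eq Finset.univ p.2 (fun k => v k * u p.1)]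
    simp [mul_comm]
  rw [hdecomp]
  have : ρ.mulVecLin (∑ k : κ, v k • (fun p : ι × κ => u p.1 * (if p.2 = k then 1 else 0))) = 0 := by
    rw [map_sum]
    refine Finset.sum_eq_zero fun k _ => ?_
    rw [LinearMap.map_smul, Matrix.mulVecLin_apply, hzero k, smul_zero]
  rw [← Matrix.mulVecLin_apply]
  exact this

lemma supp1 {ρ : Matrix (ι × κ) (ι × κ) ℂ} (hρ : ρ.PosSemidef)
    {v : κ → ℂ} (hv : ptr1 ρ *ᵥ v = 0) (u : ι → ℂ) :
    ρ *ᵥ (fun p : ι × κ => u p.1 * v p.2) = 0 := by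
  have hzero : ∀ k : ι,
      ρ *ᵥ (fun p : ι × κ => (if p.1 = k then 1 else 0) * v p.2) = 0 := by
    have hsum := sum_quad1 ρ v
    rw [hv, dotProduct_zero] at hsum
    have hterm : ∀ k : ι, star (fun p : ι × κ => (if p.1 = k then 1 else 0) * v p.2) ⬝ᵥ
        ρ *ᵥ (fun p : ι × κ => (if p.1 = k then 1 else 0) * v p.2) = 0 := by
      have := (Finset.sum_eq_zero_iff_of_nonneg
        (fun k _ => hρ.dotProduct_mulVec_nonneg (fun p : ι × κ => (if p.1 = k then 1 else 0) * v p.2))).mp hsum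
      exact fun k => this k (Finset.mem_univ k)
    exact fun k => (hρ.dotProduct_mulVec_zero_iff _).mp (hterm k)
  have hdecomp : (fun p : ι × κ => u p.1 * v p.2)
      = ∑ k : ι, u k • (fun p : ι × κ => (if p.1 = k then 1 else 0) * v p.2) := by
    funext p
    simp only [Finset.sum_apply, Pi.smul_apply, smul_eq_mul, mul_ite, mul_one, mul_zero,
      ite_mul, one_mul, zero_mul]
    rw [Finset.sum_ite_eq Finset.univ p.1 (fun k => u k * v p.2)]
    simp
  rw [hdecomp]
  have : ρ.mulVecLin (∑ k : ι, u k • (fun p : ι × κ => (if p.1 = k then 1 else 0) * v p.2)) = 0 := by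
    rw [map_sum]
    refine Finset.sum_eq_zero fun k _ => ?_
    rw [LinearMap.map_smul, Matrix.mulVecLin_apply, hzero k, smul_zero]
  rw [← Matrix.mulVecLin_apply]
  exact this

end Aux3

section Aux4
variable {ι κ : Type*} [Fintype ι] [DecidableEq ι] [Fintype κ] [DecidableEq κ]

lemma trace_mul_kron_one (M : Matrix (ι × κ) (ι × κ) ℂ) (X : Matrix ι ι ℂ) :
    (M * (X ⊗ₖ (1 : Matrix κ κ ℂ))).trace = (ptr2 M * X).trace := by
  simp only [Matrix.trace, Matrix.diag, Matrix.mul_apply, ptr2, Matrix.kroneckerMap_apply,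
    Matrix.one_apply, Fintype.sum_prod_type, mul_ite, mul_one, mul_zero,
    Finset.sum_ite_irrel, Finset.sum_const_zero, Finset.sum_ite_eq', Finset.mem_univ, if_true,
    Finset.sum_mul]
  exact Finset.sum_congr rfl fun i _ => Finset.sum_comm

lemma trace_one_kron_mul (M : Matrix (ι × κ) (ι × κ) ℂ) (Y : Matrix κ κ ℂ) :
    (M * ((1 : Matrix ι ι ℂ) ⊗ₖ Y)).trace = (ptr1 M * Y).trace := by
  simp only [Matrix.trace, Matrix.diag, Matrix.mul_apply, ptr1, Matrix.kroneckerMap_apply,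
    Matrix.one_apply, Fintype.sum_prod_type, mul_ite, mul_one, mul_zero, ite_mul, zero_mul,
    Finset.sum_ite_irrel, Finset.sum_const_zero, Finset.sum_ite_eq', Finset.mem_univ, if_true,
    Finset.sum_mul, one_mul]
  rw [Finset.sum_comm]
  exact Finset.sum_congr rfl fun i _ => Finset.sum_comm

lemma trace_mul_conj_diag (ρ W : Matrix ι ι ℂ) (c : ι → ℂ) :
    (ρ * (W * Matrix.diagonal c * star W)).trace
      = ∑ p, c p * (star W * ρ * W) p p := by
  have h1 : ρ * (W * Matrix.diagonal c * star W)
      = (ρ * W * Matrix.diagonal c) * star W := by simp only [mul_assoc]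
  rw [h1, Matrix.trace_mul_comm, ← mul_assoc, ← mul_assoc]
  simp only [Matrix.trace, Matrix.diag, Matrix.mul_diagonal]
  exact Finset.sum_congr rfl fun p _ => by ring

lemma conj_diag_entry (ρ W : Matrix ι ι ℂ) (p : ι) :
    (star W * ρ * W) p p
      = star (fun q => W q p) ⬝ᵥ ρ *ᵥ (fun q => W q p) := by
  simp only [Matrix.mul_apply, dotProduct, Matrix.mulVec, Matrix.star_eq_conjTranspose,
    Matrix.conjTranspose_apply, Pi.star_apply, Finset.sum_mul, Finset.mul_sum]
  rw [Finset.sum_comm]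
  exact Finset.sum_congr rfl fun q _ => Finset.sum_congr rfl fun r _ => by ring

end Aux4

section Main
variable {ι κ : Type*} [Fintype ι] [DecidableEq ι] [Fintype κ] [DecidableEq κ]

lemma herm_spectral {σ : Matrix ι ι ℂ} (hσ : σ.IsHermitian) :
    σ = (hσ.eigenvectorUnitary : Matrix ι ι ℂ) *
        Matrix.diagonal (fun i => ((hσ.eigenvalues i : ℝ) : ℂ)) *
        star (hσ.eigenvectorUnitary : Matrix ι ι ℂ) := by
  have := hσ.spectral_theorem
  rw [Unitary.conjStarAlgAut_apply] at this
  exact this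

lemma relEnt_kron_eq (ρ : Matrix (ι × κ) (ι × κ) ℂ) (hρ : ρ.PosSemidef)
    {σ : Matrix ι ι ℂ} {τ : Matrix κ κ ℂ} (hσ : σ.IsHermitian) (hτ : τ.IsHermitian)
    (h2 : ptr2 ρ = σ) (h1 : ptr1 ρ = τ) :
    relEnt ρ (σ ⊗ₖ τ) = -vnEnt ρ + vnEnt σ + vnEnt τ := by
  set U := (hσ.eigenvectorUnitary : Matrix ι ι ℂ) with hU_def
  set a := hσ.eigenvalues with ha_def
  have hUU : U * star U = 1 := Matrix.mem_unitaryGroup_iff.mp hσ.eigenvectorUnitary.2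
  have hUU' : star U * U = 1 := Matrix.mem_unitaryGroup_iff'.mp hσ.eigenvectorUnitary.2
  have hσspec : σ = U * Matrix.diagonal (fun i => ((a i : ℝ) : ℂ)) * star U := herm_spectral hσ
  set V := (hτ.eigenvectorUnitary : Matrix κ κ ℂ) with hV_def
  set b := hτ.eigenvalues with hb_def
  have hVV : V * star V = 1 := Matrix.mem_unitaryGroup_iff.mp hτ.eigenvectorUnitary.2
  have hVV' : star V * V = 1 := Matrix.mem_unitaryGroup_iff'.mp hτ.eigenvectorUnitary.2
  have hτspec : τ = V * Matrix.diagonal (fun i => ((b i : ℝ) : ℂ)) * star V := herm_spectral hτ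
  set W := U ⊗ₖ V with hW_def
  have hWstar : star W = star U ⊗ₖ star V := kron_conjTranspose U V
  have hWW : W * star W = 1 := by
    rw [hWstar, hW_def, ← Matrix.mul_kronecker_mul, hUU, hVV, Matrix.one_kronecker_one]
  have hWW' : star W * W = 1 := by
    rw [hWstar, hW_def, ← Matrix.mul_kronecker_mul, hUU', hVV', Matrix.one_kronecker_one]
  have hkron : σ ⊗ₖ τ
      = W * Matrix.diagonal (fun p : ι × κ => ((a p.1 * b p.2 : ℝ) : ℂ)) * star W := by
    rw [hσspec, hτspec, hWstar, hW_def, Matrix.mul_kronecker_mul, Matrix.mul_kronecker_mul,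
      Matrix.diagonal_kronecker_diagonal]
    simp only [← Complex.ofReal_mul]
  have hlog : matLog (σ ⊗ₖ τ)
      = W * Matrix.diagonal
          (fun p : ι × κ => (Real.logb 2 (a p.1 * b p.2) : ℂ)) * star W := by
    rw [hkron]
    exact matLog_conj W hWW hWW' (fun p => a p.1 * b p.2)
  have hlogσ : matLog σ
      = U * Matrix.diagonal (fun i => (Real.logb 2 (a i) : ℂ)) * star U := by
    conv_lhs => rw [hσspec]
    exact matLog_conj U hUU hUU' a
  have hlogτ : matLog τ
      = V * Matrix.diagonal (fun i => (Real.logb 2 (b i) : ℂ)) * star V := by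
    conv_lhs => rw [hτspec]
    exact matLog_conj V hVV hVV' b
  set t : ι × κ → ℂ := fun p => (star W * ρ * W) p p with ht_def
  have Ftr : (ρ * matLog (σ ⊗ₖ τ)).trace
      = ∑ p : ι × κ, (Real.logb 2 (a p.1 * b p.2) : ℂ) * t p := by
    rw [hlog]; exact trace_mul_conj_diag ρ W _
  have hlσ1 : matLog σ ⊗ₖ (1 : Matrix κ κ ℂ)
      = W * Matrix.diagonal (fun p : ι × κ => (Real.logb 2 (a p.1) : ℂ)) * star W := by
    have hone : (1 : Matrix κ κ ℂ) = V * Matrix.diagonal (fun _ : κ => (1 : ℂ)) * star V := by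
      rw [Matrix.diagonal_one, mul_one, hVV]
    rw [hlogσ, hone, hWstar, hW_def, Matrix.mul_kronecker_mul, Matrix.mul_kronecker_mul,
      Matrix.diagonal_kronecker_diagonal]
    simp only [mul_one]
  have hl1τ : (1 : Matrix ι ι ℂ) ⊗ₖ matLog τ
      = W * Matrix.diagonal (fun p : ι × κ => (Real.logb 2 (b p.2) : ℂ)) * star W := by
    have hone : (1 : Matrix ι ι ℂ) = U * Matrix.diagonal (fun _ : ι => (1 : ℂ)) * star U := by
      rw [Matrix.diagonal_one, mul_one, hUU]
    rw [hlogτ, hone, hWstar, hW_def, Matrix.mul_kronecker_mul, Matrix.mul_kronecker_mul,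
      Matrix.diagonal_kronecker_diagonal]
    simp only [one_mul]
  have Fσ : (ρ * (matLog σ ⊗ₖ (1 : Matrix κ κ ℂ))).trace
      = ∑ p : ι × κ, (Real.logb 2 (a p.1) : ℂ) * t p := by
    rw [hlσ1]; exact trace_mul_conj_diag ρ W _
  have Fτ : (ρ * ((1 : Matrix ι ι ℂ) ⊗ₖ matLog τ)).trace
      = ∑ p : ι × κ, (Real.logb 2 (b p.2) : ℂ) * t p := by
    rw [hl1τ]; exact trace_mul_conj_diag ρ W _
  have Fsupp : ∀ p : ι × κ, (a p.1 = 0 ∨ b p.2 = 0) → t p = 0 := by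
    intro p hp
    have hw : (fun q : ι × κ => W q p) = (fun q : ι × κ => U q.1 p.1 * V q.2 p.2) := rfl
    have hzero : ρ *ᵥ (fun q : ι × κ => U q.1 p.1 * V q.2 p.2) = 0 := by
      rcases hp with ha0 | hb0
      · have hu : ptr2 ρ *ᵥ (fun x => U x p.1) = 0 := by
          rw [h2]
          have hu1 : (fun x => U x p.1) = U *ᵥ Pi.single p.1 1 := by
            funext x; rw [Matrix.mulVec_single]; exact (mul_one _).symm
          rw [hu1, Matrix.mulVec_mulVec, hσspec, mul_assoc, mul_assoc, ← Matrix.mulVec_mulVec,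
            ← Matrix.mulVec_mulVec, Matrix.mulVec_single_one]
          have : (star U * U).col p.1 = Pi.single p.1 (1 : ℂ) := by
            rw [hUU']; funext i; simp [Matrix.one_apply, Pi.single_apply]
          rw [this, Matrix.diagonal_mulVec_single, ha0]
          simp
        exact supp2 hρ hu (fun y => V y p.2)
      · have hv : ptr1 ρ *ᵥ (fun y => V y p.2) = 0 := by
          rw [h1]
          have hv1 : (fun y => V y p.2) = V *ᵥ Pi.single p.2 1 := by
            funext y; rw [Matrix.mulVec_single]; exact (mul_one _).symm
          rw [hv1, Matrix.mulVec_mulVec, hτspec, mul_assoc, mul_assoc, ← Matrix.mulVec_mulVec,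
            ← Matrix.mulVec_mulVec, Matrix.mulVec_single_one]
          have : (star V * V).col p.2 = Pi.single p.2 (1 : ℂ) := by
            rw [hVV']; funext i; simp [Matrix.one_apply, Pi.single_apply]
          rw [this, Matrix.diagonal_mulVec_single, hb0]
          simp
        exact supp1 hρ hv (fun x => U x p.1)
    rw [ht_def]
    simp only []
    rw [conj_diag_entry ρ W p, hw, hzero, dotProduct_zero]
  have key : (ρ * matLog (σ ⊗ₖ τ)).trace
      = (ρ * (matLog σ ⊗ₖ (1 : Matrix κ κ ℂ))).trace
        + (ρ * ((1 : Matrix ι ι ℂ) ⊗ₖ matLog τ)).trace := by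
    rw [Ftr, Fσ, Fτ, ← Finset.sum_add_distrib]
    refine Finset.sum_congr rfl fun p _ => ?_
    by_cases ha0 : a p.1 = 0
    · rw [Fsupp p (Or.inl ha0)]; ring
    by_cases hb0 : b p.2 = 0
    · rw [Fsupp p (Or.inr hb0)]; ring
    rw [Real.logb_mul ha0 hb0]
    push_cast
    ring
  have hptr2 : (ρ * (matLog σ ⊗ₖ (1 : Matrix κ κ ℂ))).trace = (σ * matLog σ).trace := by
    rw [trace_mul_kron_one, h2]
  have hptr1 : (ρ * ((1 : Matrix ι ι ℂ) ⊗ₖ matLog τ)).trace = (τ * matLog τ).trace := by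
    rw [trace_one_kron_mul, h1]
  rw [relEnt, mul_sub, Matrix.trace_sub, Complex.sub_re, key, hptr2, hptr1, Complex.add_re,
    vnEnt, vnEnt, vnEnt]
  ring

end Main

section Assoc
variable {ι κ : Type*} [Fintype ι] [DecidableEq ι] [Fintype κ] [DecidableEq κ]

lemma vnEnt_conj (U : Matrix ι ι ℂ) (hU : U * star U = 1) (hU' : star U * U = 1) (d : ι → ℝ) :
    vnEnt (U * Matrix.diagonal (fun i => (d i : ℂ)) * star U)
      = -∑ i, d i * Real.logb 2 (d i) := by
  rw [vnEnt, matLog_conj U hU hU' d, trace_mul_conj_diag]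
  congr 1
  have hX : star U * (U * Matrix.diagonal (fun i => (d i : ℂ)) * star U) * U
      = Matrix.diagonal (fun i => (d i : ℂ)) := by
    simp only [← mul_assoc]
    rw [hU', one_mul, mul_assoc, hU', mul_one]
  rw [hX]
  simp only [Matrix.diagonal_apply_eq, ← Complex.ofReal_mul]
  rw [← Complex.ofReal_sum, Complex.ofReal_re]
  exact Finset.sum_congr rfl fun i _ => mul_comm _ _

lemma vnEnt_submatrix {ρ : Matrix ι ι ℂ} (hρ : ρ.IsHermitian) (e : κ ≃ ι) :
    vnEnt (ρ.submatrix e e) = vnEnt ρ := by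
  set U := (hρ.eigenvectorUnitary : Matrix ι ι ℂ) with hU_def
  set d := hρ.eigenvalues with hd_def
  have hUU : U * star U = 1 := Matrix.mem_unitaryGroup_iff.mp hρ.eigenvectorUnitary.2
  have hUU' : star U * U = 1 := Matrix.mem_unitaryGroup_iff'.mp hρ.eigenvectorUnitary.2
  have hspec : ρ = U * Matrix.diagonal (fun i => ((d i : ℝ) : ℂ)) * star U := herm_spectral hρ
  set U' := U.submatrix e e with hU'_def
  have h1 : U' * star U' = 1 := by
    rw [hU'_def, Matrix.star_eq_conjTranspose, Matrix.conjTranspose_submatrix,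
      Matrix.submatrix_mul_equiv U Uᴴ e e e, ← Matrix.star_eq_conjTranspose, hUU,
      Matrix.submatrix_one_equiv]
  have h2 : star U' * U' = 1 := by
    rw [hU'_def, Matrix.star_eq_conjTranspose, Matrix.conjTranspose_submatrix,
      Matrix.submatrix_mul_equiv Uᴴ U e e e, ← Matrix.star_eq_conjTranspose, hUU',
      Matrix.submatrix_one_equiv]
  have hsub : ρ.submatrix e e
      = U' * Matrix.diagonal (fun i => ((d (e i) : ℝ) : ℂ)) * star U' := by
    conv_lhs => rw [hspec]
    rw [hU'_def]
    simp only [Matrix.star_eq_conjTranspose, Matrix.conjTranspose_submatrix]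
    rw [← Matrix.submatrix_mul_equiv (U * Matrix.diagonal (fun i => ((d i : ℝ) : ℂ))) Uᴴ e e e,
      ← Matrix.submatrix_mul_equiv U (Matrix.diagonal (fun i => ((d i : ℝ) : ℂ))) e e e,
      Matrix.submatrix_diagonal_equiv]
    rfl
  rw [hsub, vnEnt_conj U' h1 h2 (fun i => d (e i)), hspec, vnEnt_conj U hUU hUU' d]
  congr 1
  exact Equiv.sum_comp e (fun i => d i * Real.logb 2 (d i))

end Assoc

/-- Strong subadditivity of von Neumann entropy follows from monotonicity of
the relative entropy under the partial trace over `A`, applied to the pair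
`(ρ^{ABC}, ρ^{AB} ⊗ ρ^C)`. -/
theorem ssa_of_relEnt_mono [Fintype α] [DecidableEq α] [Fintype β]
    [DecidableEq β] [Fintype γ] [DecidableEq γ]
    (hmono : ∀ ρ : Matrix (α × β × γ) (α × β × γ) ℂ, IsDensity ρ →
      relEnt (assocM ρ) (trC ρ ⊗ₖ trAB ρ) ≥ relEnt (trA ρ) (trAC ρ ⊗ₖ trAB ρ)) :
    ∀ ρ : Matrix (α × β × γ) (α × β × γ) ℂ, IsDensity ρ →
      vnEnt (trC ρ) + vnEnt (trA ρ) ≥ vnEnt ρ + vnEnt (trAC ρ) := by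
  intro ρ hρ
  obtain ⟨hpsd, htr⟩ := hρ
  set e : (α × β) × γ ≃ α × β × γ := Equiv.prodAssoc α β γ with he_def
  have hassoc : assocM ρ = ρ.submatrix e e := rfl
  have hpsd' : (assocM ρ).PosSemidef := by rw [hassoc]; exact hpsd.submatrix e
  have htrA_ptr : trA ρ = ptr1 ρ := rfl
  have hpsdA : (trA ρ).PosSemidef := by rw [htrA_ptr]; exact ptr1_posSemidef hpsd
  have htrC_ptr : trC ρ = ptr2 (assocM ρ) := rfl
  have htrAB_ptr : trAB ρ = ptr1 (assocM ρ) := by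
    ext i j
    simp only [trAB, ptr1, Fintype.sum_prod_type, assocM]
  have htrAC_ptr : trAC ρ = ptr2 (trA ρ) := by
    ext i j
    simp only [trAC, trA, ptr2]
    exact Finset.sum_comm
  have htrAB_ptr' : trAB ρ = ptr1 (trA ρ) := by
    ext i j
    simp only [trAB, trA, ptr1]
    exact Finset.sum_comm
  have hC : (trC ρ).IsHermitian := by
    rw [htrC_ptr]; exact ptr2_isHermitian hpsd'.1
  have hAB : (trAB ρ).IsHermitian := by
    rw [htrAB_ptr]; exact ptr1_isHermitian hpsd'.1
  have hAC : (trAC ρ).IsHermitian := by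
    rw [htrAC_ptr]; exact ptr2_isHermitian hpsdA.1
  have e1 : relEnt (assocM ρ) (trC ρ ⊗ₖ trAB ρ)
      = -vnEnt (assocM ρ) + vnEnt (trC ρ) + vnEnt (trAB ρ) :=
    relEnt_kron_eq (assocM ρ) hpsd' hC hAB htrC_ptr.symm htrAB_ptr.symm
  have e2 : relEnt (trA ρ) (trAC ρ ⊗ₖ trAB ρ)
      = -vnEnt (trA ρ) + vnEnt (trAC ρ) + vnEnt (trAB ρ) :=
    relEnt_kron_eq (trA ρ) hpsdA hAC hAB htrAC_ptr.symm htrAB_ptr'.symm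
  have e3 : vnEnt (assocM ρ) = vnEnt ρ := by
    rw [hassoc]; exact vnEnt_submatrix hpsd.1 e
  have hm := hmono ρ ⟨hpsd, htr⟩
  rw [e1, e2, e3] at hm
  linarith
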